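/- Let κ_s, β_s > 0, μ_s ≥ 0, M_{s,0} ≥ 0, and let φ : [0,∞) → ℝ be continuous with 0 ≤ φ(t) ≤ 1 for all t ≥ 0. Suppose c : [0,∞) → ℝ is differentiable with c(t) ≠ −1 for all t and satisfies c'(t) = κ_s·(1/(1+c(t)))·(1−φ(t)) − (μ_s φ(t) + β_s)·c(t) for all t ≥ 0, with 0 ≤ c(0) ≤ M_{s,0}. Then 0 ≤ c(t) ≤ max{M_{s,0}, κ_s/β_s} for all t ≥ 0. -/

import Mathlib

/-- invariant-region bound for the soluble-MMP concentration c: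
if c' = κ_s·(1/(1+c))·(1−φ) − (μ_s φ + β_s) c with 0 ≤ φ ≤ 1, c ≠ −1 and
0 ≤ c(0) ≤ M_{s,0}, then 0 ≤ c(t) ≤ max{M_{s,0}, κ_s/β_s} for all t ≥ 0. -/
theorem soluble_mmp_invariant_region
    (κs βs μs Ms0 : ℝ)
    (hκs : 0 < κs) (hβs : 0 < βs) (hμs : 0 ≤ μs) (hMs0 : 0 ≤ Ms0)
    (φ c : ℝ → ℝ)
    (hφ_cont : ContinuousOn φ (Set.Ici 0))
    (hφ_range : ∀ t ∈ Set.Ici (0 : ℝ), 0 ≤ φ t ∧ φ t ≤ 1)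
    (hc_ne : ∀ t : ℝ, c t ≠ -1)
    (hc : ∀ t ∈ Set.Ici (0 : ℝ),
      HasDerivWithinAt c
        (κs * (1 / (1 + c t)) * (1 - φ t) - (μs * φ t + βs) * c t) (Set.Ici 0) t)
    (hc0_nonneg : 0 ≤ c 0) (hc0_le : c 0 ≤ Ms0) :
    ∀ t ∈ Set.Ici (0 : ℝ), 0 ≤ c t ∧ c t ≤ max Ms0 (κs / βs) := by
  have hc_cont : ContinuousOn c (Set.Ici 0) := fun t ht => (hc t ht).continuousWithinAt
  -- c stays above -1
  have hgt : ∀ t ∈ Set.Ici (0 : ℝ), -1 < c t := by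
    intro t ht
    by_contra h
    push_neg at h
    have hlt : c t < -1 := lt_of_le_of_ne h (hc_ne t)
    have htpos : (0 : ℝ) ≤ t := ht
    have hsub : Set.Icc (0 : ℝ) t ⊆ Set.Ici 0 := fun x hx => hx.1
    have := intermediate_value_Icc' htpos (hc_cont.mono hsub)
      (a := 0) (b := t) (show (-1 : ℝ) ∈ Set.Icc (c t) (c 0) from
        ⟨hlt.le, by linarith⟩)
    obtain ⟨s, _, hs⟩ := this
    exact hc_ne s hs
  set M : ℝ := max Ms0 (κs / βs) with hM
  have hMpos : 0 < M := lt_of_lt_of_le (div_pos hκs hβs) (le_max_right _ _)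
  intro t ht
  have htpos : (0 : ℝ) ≤ t := ht
  have hsub : Set.Icc (0 : ℝ) t ⊆ Set.Ici 0 := fun x hx => hx.1
  have hderiv : ∀ x ∈ Set.Ico (0 : ℝ) t,
      HasDerivWithinAt c
        (κs * (1 / (1 + c x)) * (1 - φ x) - (μs * φ x + βs) * c x) (Set.Ici x) x :=
    fun x hx => (hc x hx.1).mono (Set.Ici_subset_Ici.2 hx.1)
  constructor
  · -- lower bound: for every ε > 0, -c x ≤ ε(1+x)
    have key : ∀ ε : ℝ, 0 < ε → -c t ≤ ε * (1 + t) := by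
      intro ε hε
      have := image_le_of_deriv_right_lt_deriv_boundary
        (f := fun x => -c x)
        (f' := fun x => -(κs * (1 / (1 + c x)) * (1 - φ x) - (μs * φ x + βs) * c x))
        (a := 0) (b := t)
        ((hc_cont.mono hsub).neg)
        (fun x hx => (hderiv x hx).neg)
        (B := fun x => ε * (1 + x)) (B' := fun _ => ε)
        (by simpa using by linarith : -c 0 ≤ ε * (1 + 0))
        (fun x => by
          simpa using ((hasDerivAt_id x).const_add (1 : ℝ)).const_mul ε)
        ?_ (Set.right_mem_Icc.2 htpos)
      · exact this
      · intro x hx hcx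
        have hx0 : (0 : ℝ) ≤ x := hx.1
        have h1 : -1 < c x := hgt x hx0
        have hφx := hφ_range x hx0
        have hinv : 0 ≤ κs * (1 / (1 + c x)) * (1 - φ x) := by
          apply mul_nonneg (mul_nonneg hκs.le _) (by linarith [hφx.2])
          exact one_div_nonneg.2 (by linarith)
        have hcneg : c x ≤ 0 := by nlinarith
        have h2 : (μs * φ x + βs) * c x ≤ 0 :=
          mul_nonpos_of_nonneg_of_nonpos (by nlinarith [hφx.1]) hcneg
        nlinarith
    by_contra h
    push_neg at h
    have hε : 0 < (-c t) / (2 * (1 + t)) :=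
      div_pos (by linarith) (by positivity)
    have := key _ hε
    rw [div_mul_eq_mul_div, le_div_iff₀ (by positivity)] at this
    nlinarith
  · -- upper bound
    have := image_le_of_deriv_right_lt_deriv_boundary
      (f := c)
      (f' := fun x => κs * (1 / (1 + c x)) * (1 - φ x) - (μs * φ x + βs) * c x)
      (a := 0) (b := t)
      (hc_cont.mono hsub) hderiv
      (B := fun _ => M) (B' := fun _ => 0)
      (le_trans hc0_le (le_max_left _ _))
      (fun x => hasDerivAt_const x M)
      ?_ (Set.right_mem_Icc.2 htpos)
    · exact this
    · intro x hx hcx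
      have hx0 : (0 : ℝ) ≤ x := hx.1
      have hφx := hφ_range x hx0
      have h1M : (1 : ℝ) < 1 + M := by linarith
      have hfrac : κs * (1 / (1 + M)) * (1 - φ x) < κs := by
        have h1 : 1 / (1 + M) < 1 := by
          rw [div_lt_one (by linarith)]; linarith
        have h2 : κs * (1 / (1 + M)) < κs := by
          nlinarith [h1]
        calc κs * (1 / (1 + M)) * (1 - φ x) ≤ κs * (1 / (1 + M)) * 1 := by
              apply mul_le_mul_of_nonneg_left (by linarith [hφx.1]) (by positivity)
          _ < κs := by linarith
      have hκsM : κs ≤ βs * M := by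
        rw [hM]
        calc κs = βs * (κs / βs) := by field_simp
          _ ≤ βs * max Ms0 (κs / βs) := by
              apply mul_le_mul_of_nonneg_left (le_max_right _ _) hβs.le
      have : βs * M ≤ (μs * φ x + βs) * M := by
        apply mul_le_mul_of_nonneg_right _ hMpos.le
        nlinarith [hφx.1]
      rw [hcx]
      linarith
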